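/- (Representation approximation bias, source of the h² term.) Let Θ = WΛZᵀ ∈ ℝ^{p×q} with W ∈ ℝ^{p×r}, Z ∈ ℝ^{q×r} having orthonormal columns and Λ ∈ ℝ^{r×r}. Let U ∈ ℝ^{p×p₀} and V ∈ ℝ^{q×q₀} have orthonormal columns. Then ‖Θ − UUᵀΘVVᵀ‖_F ≤ ‖Λ‖_op ( ‖(I_p − UUᵀ)W‖_F + ‖(I_q − VVᵀ)Z‖_F ), where ‖Λ‖_op denotes the operator (spectral) norm of Λ. -/

import Mathlib

open Matrix

/-- Frobenius norm of a real matrix. -/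
noncomputable def frobNorm {m n : ℕ} (A : Matrix (Fin m) (Fin n) ℝ) : ℝ :=
  Real.sqrt (Matrix.trace (Aᵀ * A))

/-- Operator (spectral) norm of a real matrix. -/
noncomputable def opNorm {m n : ℕ} (A : Matrix (Fin m) (Fin n) ℝ) : ℝ :=
  ‖LinearMap.toContinuousLinearMap (Matrix.toEuclideanLin A)‖

lemma conjT_eq {m n : ℕ} (A : Matrix (Fin m) (Fin n) ℝ) : Aᴴ = Aᵀ := by
  ext i j; simp [conjTranspose_apply]

section opn
open scoped Matrix.Norms.L2Operator

lemma opNorm_eq' {m n : ℕ} (A : Matrix (Fin m) (Fin n) ℝ) : opNorm A = ‖A‖ := rfl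

lemma opNorm_nonneg' {m n : ℕ} (A : Matrix (Fin m) (Fin n) ℝ) : 0 ≤ opNorm A := by
  rw [opNorm_eq']; exact norm_nonneg _

lemma opNorm_mul_le' {m n k : ℕ} (A : Matrix (Fin m) (Fin n) ℝ) (B : Matrix (Fin n) (Fin k) ℝ) :
    opNorm (A * B) ≤ opNorm A * opNorm B := by
  simp only [opNorm_eq']; exact Matrix.l2_opNorm_mul A B

lemma opNorm_transpose' {m n : ℕ} (A : Matrix (Fin m) (Fin n) ℝ) : opNorm Aᵀ = opNorm A := by
  simp only [opNorm_eq']; rw [← conjT_eq]; exact Matrix.l2_opNorm_conjTranspose A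

lemma opNorm_orth_le_one {m r : ℕ} (W : Matrix (Fin m) (Fin r) ℝ) (hW : Wᵀ * W = 1) :
    opNorm W ≤ 1 := by
  have h1 : ‖Wᴴ * W‖ = ‖W‖ * ‖W‖ := Matrix.l2_opNorm_conjTranspose_mul_self W
  rw [conjT_eq, hW] at h1
  have h2 : ‖(1 : Matrix (Fin r) (Fin r) ℝ)‖ ≤ 1 := by
    rw [Matrix.l2_opNorm_def]
    apply ContinuousLinearMap.opNorm_le_bound _ zero_le_one
    intro x
    have : (toEuclideanLin (1 : Matrix (Fin r) (Fin r) ℝ)) x = x := by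
      simp [toEuclideanLin_apply]
    simp only [LinearEquiv.trans_apply, LinearMap.coe_toContinuousLinearMap', this, one_mul]
    exact le_refl _
  rw [opNorm_eq']
  nlinarith [norm_nonneg W]

end opn

lemma trace_eq_sum {m n : ℕ} (A : Matrix (Fin m) (Fin n) ℝ) :
    Matrix.trace (Aᵀ * A) = ∑ j, ∑ i, (A i j) ^ 2 := by
  simp [Matrix.trace, Matrix.diag, Matrix.mul_apply, sq]

lemma frobNorm_nonneg {m n : ℕ} (A : Matrix (Fin m) (Fin n) ℝ) : 0 ≤ frobNorm A :=
  Real.sqrt_nonneg _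

lemma frobNorm_transpose {m n : ℕ} (A : Matrix (Fin m) (Fin n) ℝ) :
    frobNorm Aᵀ = frobNorm A := by
  unfold frobNorm
  rw [transpose_transpose, Matrix.trace_mul_comm]

section frob
attribute [local instance] Matrix.frobeniusSeminormedAddCommGroup

lemma frobNorm_eq_norm {m n : ℕ} (A : Matrix (Fin m) (Fin n) ℝ) : frobNorm A = ‖A‖ := by
  rw [Matrix.frobenius_norm_def, frobNorm, trace_eq_sum, ← Real.sqrt_eq_rpow, Finset.sum_comm]
  simp [Real.norm_eq_abs, sq_abs]

lemma frobNorm_add_le {m n : ℕ} (A B : Matrix (Fin m) (Fin n) ℝ) :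
    frobNorm (A + B) ≤ frobNorm A + frobNorm B := by
  simp only [frobNorm_eq_norm]; exact norm_add_le A B

end frob

lemma frobNorm_mul_le_left {a b c : ℕ} (M : Matrix (Fin a) (Fin b) ℝ)
    (N : Matrix (Fin b) (Fin c) ℝ) :
    frobNorm (M * N) ≤ opNorm M * frobNorm N := by
  have key : ∀ j : Fin c, ∑ i, ((M * N) i j)^2 ≤ (opNorm M)^2 * ∑ i, (N i j)^2 := by
    intro j
    set x : EuclideanSpace ℝ (Fin b) := (WithLp.equiv 2 (Fin b → ℝ)).symm (fun i => N i j)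
      with hxdef
    have h1 : toEuclideanLin M x = (WithLp.equiv 2 (Fin a → ℝ)).symm (fun i => (M * N) i j) := by
      rw [hxdef]
      rfl
    have hxn : ‖x‖ ^ 2 = ∑ i, (N i j)^2 := by
      rw [EuclideanSpace.norm_eq, Real.sq_sqrt (by positivity)]
      simp [hxdef, Real.norm_eq_abs, sq_abs]
    have hMx : ‖toEuclideanLin M x‖ ^ 2 = ∑ i, ((M * N) i j)^2 := by
      rw [h1, EuclideanSpace.norm_eq, Real.sq_sqrt (by positivity)]
      simp [Real.norm_eq_abs, sq_abs]
    have h2 : ‖toEuclideanLin M x‖ ≤ opNorm M * ‖x‖ := by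
      have := (LinearMap.toContinuousLinearMap (toEuclideanLin M)).le_opNorm x
      simpa [opNorm] using this
    calc ∑ i, ((M * N) i j)^2 = ‖toEuclideanLin M x‖ ^ 2 := hMx.symm
      _ ≤ (opNorm M * ‖x‖)^2 := pow_le_pow_left₀ (norm_nonneg _) h2 2
      _ = (opNorm M)^2 * ∑ i, (N i j)^2 := by rw [mul_pow, hxn]
  have hsum : Matrix.trace ((M*N)ᵀ * (M*N)) ≤ (opNorm M)^2 * Matrix.trace (Nᵀ * N) := by
    rw [trace_eq_sum, trace_eq_sum, Finset.mul_sum]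
    exact Finset.sum_le_sum (fun j _ => key j)
  unfold frobNorm
  calc Real.sqrt (Matrix.trace ((M*N)ᵀ*(M*N)))
      ≤ Real.sqrt ((opNorm M)^2 * Matrix.trace (Nᵀ*N)) := Real.sqrt_le_sqrt hsum
    _ = opNorm M * Real.sqrt (Matrix.trace (Nᵀ*N)) := by
        rw [Real.sqrt_mul (sq_nonneg _), Real.sqrt_sq (opNorm_nonneg' M)]

lemma frobNorm_mul_le_right {a b c : ℕ} (M : Matrix (Fin a) (Fin b) ℝ)
    (N : Matrix (Fin b) (Fin c) ℝ) :
    frobNorm (M * N) ≤ frobNorm M * opNorm N := by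
  calc frobNorm (M * N) = frobNorm ((M * N)ᵀ) := (frobNorm_transpose _).symm
    _ = frobNorm (Nᵀ * Mᵀ) := by rw [transpose_mul]
    _ ≤ opNorm Nᵀ * frobNorm Mᵀ := frobNorm_mul_le_left _ _
    _ = frobNorm M * opNorm N := by rw [opNorm_transpose', frobNorm_transpose, mul_comm]

/-- Representation approximation bias (source of the h² term): for Θ = WΛZᵀ with
column-orthonormal W, Z and column-orthonormal U, V,
‖Θ − UUᵀΘVVᵀ‖_F ≤ ‖Λ‖_op (‖(I − UUᵀ)W‖_F + ‖(I − VVᵀ)Z‖_F). -/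
theorem representation_approximation_bias {p q p₀ q₀ r : ℕ}
    (W : Matrix (Fin p) (Fin r) ℝ) (Z : Matrix (Fin q) (Fin r) ℝ)
    (Λ : Matrix (Fin r) (Fin r) ℝ)
    (hW : Wᵀ * W = 1) (hZ : Zᵀ * Z = 1)
    (Θ : Matrix (Fin p) (Fin q) ℝ) (hΘ : Θ = W * Λ * Zᵀ)
    (U : Matrix (Fin p) (Fin p₀) ℝ) (V : Matrix (Fin q) (Fin q₀) ℝ)
    (hU : Uᵀ * U = 1) (hV : Vᵀ * V = 1) :
    frobNorm (Θ - U * Uᵀ * Θ * V * Vᵀ) ≤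
      opNorm Λ * (frobNorm ((1 - U * Uᵀ) * W) + frobNorm ((1 - V * Vᵀ) * Z)) := by
  have hsplit : Θ - U * Uᵀ * Θ * V * Vᵀ
      = (1 - U * Uᵀ) * Θ + (U * Uᵀ) * Θ * (1 - V * Vᵀ) := by
    simp only [Matrix.sub_mul, Matrix.mul_sub, Matrix.one_mul, Matrix.mul_one, Matrix.mul_assoc]
    abel
  have hZt : opNorm Zᵀ ≤ 1 := by rw [opNorm_transpose']; exact opNorm_orth_le_one Z hZ
  have hUt : opNorm Uᵀ ≤ 1 := by rw [opNorm_transpose']; exact opNorm_orth_le_one U hU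
  have t1 : frobNorm ((1 - U * Uᵀ) * Θ) ≤ opNorm Λ * frobNorm ((1 - U * Uᵀ) * W) := by
    have e : (1 - U * Uᵀ) * Θ = ((1 - U * Uᵀ) * W) * (Λ * Zᵀ) := by
      rw [hΘ]; simp only [Matrix.mul_assoc]
    rw [e]
    have hop : opNorm (Λ * Zᵀ) ≤ opNorm Λ := by
      calc opNorm (Λ * Zᵀ) ≤ opNorm Λ * opNorm Zᵀ := opNorm_mul_le' _ _
        _ ≤ opNorm Λ * 1 := mul_le_mul_of_nonneg_left hZt (opNorm_nonneg' _)
        _ = opNorm Λ := mul_one _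
    calc frobNorm (((1 - U * Uᵀ) * W) * (Λ * Zᵀ))
        ≤ frobNorm ((1 - U * Uᵀ) * W) * opNorm (Λ * Zᵀ) := frobNorm_mul_le_right _ _
      _ ≤ frobNorm ((1 - U * Uᵀ) * W) * opNorm Λ :=
          mul_le_mul_of_nonneg_left hop (frobNorm_nonneg _)
      _ = opNorm Λ * frobNorm ((1 - U * Uᵀ) * W) := mul_comm _ _
  have t2 : frobNorm ((U * Uᵀ) * Θ * (1 - V * Vᵀ)) ≤
      opNorm Λ * frobNorm ((1 - V * Vᵀ) * Z) := by
    have e : (U * Uᵀ) * Θ * (1 - V * Vᵀ) = ((U * Uᵀ) * W * Λ) * (Zᵀ * (1 - V * Vᵀ)) := by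
      rw [hΘ]; simp only [Matrix.mul_assoc]
    rw [e]
    have hUU : opNorm (U * Uᵀ) ≤ 1 := by
      calc opNorm (U * Uᵀ) ≤ opNorm U * opNorm Uᵀ := opNorm_mul_le' _ _
        _ ≤ 1 * 1 := mul_le_mul (opNorm_orth_le_one U hU) hUt (opNorm_nonneg' _) zero_le_one
        _ = 1 := one_mul _
    have hop : opNorm ((U * Uᵀ) * W * Λ) ≤ opNorm Λ := by
      calc opNorm ((U * Uᵀ) * W * Λ) ≤ opNorm ((U * Uᵀ) * W) * opNorm Λ := opNorm_mul_le' _ _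
        _ ≤ 1 * opNorm Λ := by
            apply mul_le_mul_of_nonneg_right _ (opNorm_nonneg' _)
            calc opNorm ((U * Uᵀ) * W) ≤ opNorm (U * Uᵀ) * opNorm W := opNorm_mul_le' _ _
              _ ≤ 1 * 1 := mul_le_mul hUU (opNorm_orth_le_one W hW) (opNorm_nonneg' _) zero_le_one
              _ = 1 := one_mul _
        _ = opNorm Λ := one_mul _
    have hfr : frobNorm (Zᵀ * (1 - V * Vᵀ)) = frobNorm ((1 - V * Vᵀ) * Z) := by
      rw [← frobNorm_transpose (Zᵀ * (1 - V * Vᵀ)), transpose_mul, transpose_transpose]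
      congr 2
      rw [transpose_sub, transpose_one, transpose_mul, transpose_transpose]
    calc frobNorm (((U * Uᵀ) * W * Λ) * (Zᵀ * (1 - V * Vᵀ)))
        ≤ opNorm ((U * Uᵀ) * W * Λ) * frobNorm (Zᵀ * (1 - V * Vᵀ)) := frobNorm_mul_le_left _ _
      _ ≤ opNorm Λ * frobNorm ((1 - V * Vᵀ) * Z) := by
          rw [hfr]; exact mul_le_mul_of_nonneg_right hop (frobNorm_nonneg _)
  calc frobNorm (Θ - U * Uᵀ * Θ * V * Vᵀ)
      = frobNorm ((1 - U * Uᵀ) * Θ + (U * Uᵀ) * Θ * (1 - V * Vᵀ)) := by rw [hsplit]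
    _ ≤ frobNorm ((1 - U * Uᵀ) * Θ) + frobNorm ((U * Uᵀ) * Θ * (1 - V * Vᵀ)) :=
        frobNorm_add_le _ _
    _ ≤ opNorm Λ * frobNorm ((1 - U * Uᵀ) * W) + opNorm Λ * frobNorm ((1 - V * Vᵀ) * Z) :=
        add_le_add t1 t2
    _ = opNorm Λ * (frobNorm ((1 - U * Uᵀ) * W) + frobNorm ((1 - V * Vᵀ) * Z)) :=
        (mul_add _ _ _).symm
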